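/- Let Q be a quantale with exactly five pairwise distinct elements ⊥, α, β, γ, ⊤ (every element of Q is one of these) such that α, β, γ are pairwise incomparable, each pairwise join of α, β, γ equals ⊤ and each pairwise meet equals ⊥ (the diamond M3). Assume γ * a ⊔ a * γ ≤ a for all a ∈ Q. Then Q has a two-sided multiplicative unit if and only if γ * γ = γ; and in that case γ is the unit (γ * a = a = a * γ for all a ∈ Q). -/
import Mathlib


/-- Let `Q` be a quantale on the diamond `M3` (exactly the five
pairwise distinct elements `⊥, α, β, γ, ⊤`, with `α, β, γ` pairwise incomparable,
pairwise joins `⊤` and pairwise meets `⊥`) such that `γ * a ⊔ a * γ ≤ a` for all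
`a`. Then `Q` has a two-sided unit iff `γ * γ = γ`, in which case `γ` is the unit. -/
theorem stmt_15 {Q : Type*} [CompleteLattice Q] (mul : Q → Q → Q)
    (hassoc : ∀ a b c : Q, mul (mul a b) c = mul a (mul b c))
    (hsSup_left : ∀ (A : Set Q) (b : Q), mul (sSup A) b = ⨆ a ∈ A, mul a b)
    (hsSup_right : ∀ (A : Set Q) (b : Q), mul b (sSup A) = ⨆ a ∈ A, mul b a)
    (α β γ : Q)
    (hdistinct : ([⊥, α, β, γ, ⊤] : List Q).Pairwise (· ≠ ·))
    (hcover : ∀ q : Q, q = ⊥ ∨ q = α ∨ q = β ∨ q = γ ∨ q = ⊤)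
    (hαβ : ¬ α ≤ β ∧ ¬ β ≤ α) (hαγ : ¬ α ≤ γ ∧ ¬ γ ≤ α) (hβγ : ¬ β ≤ γ ∧ ¬ γ ≤ β)
    (hjαβ : α ⊔ β = ⊤) (hjαγ : α ⊔ γ = ⊤) (hjβγ : β ⊔ γ = ⊤)
    (hmαβ : α ⊓ β = ⊥) (hmαγ : α ⊓ γ = ⊥) (hmβγ : β ⊓ γ = ⊥)
    (hprop : ∀ a : Q, mul γ a ⊔ mul a γ ≤ a) :
    ((∃ u : Q, ∀ a : Q, mul u a = a ∧ mul a u = a) ↔ mul γ γ = γ) ∧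
    (mul γ γ = γ → ∀ a : Q, mul γ a = a ∧ mul a γ = a) := by
  simp only [List.pairwise_cons, List.mem_cons, List.not_mem_nil, List.Pairwise.nil,
    forall_eq_or_imp, forall_eq, List.mem_singleton, ne_eq] at hdistinct
  obtain ⟨⟨hbα, hbβ, hbγ, hbt, -⟩, ⟨hαβ', hαγ', hαt, -⟩, ⟨hβγ', hβt, -⟩, ⟨hγt, -⟩, -⟩ := hdistinct
  have hsup_r : ∀ c x y : Q, mul c (x ⊔ y) = mul c x ⊔ mul c y := by
    intro c x y
    have h1 : (x ⊔ y : Q) = sSup {x, y} := by rw [sSup_pair]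
    rw [h1, hsSup_right, iSup_pair]
  have hsup_l : ∀ c x y : Q, mul (x ⊔ y) c = mul x c ⊔ mul y c := by
    intro c x y
    have h1 : (x ⊔ y : Q) = sSup {x, y} := by rw [sSup_pair]
    rw [h1, hsSup_left, iSup_pair]
  have hγαle : mul γ α ≤ α := le_trans le_sup_left (hprop α)
  have hαγle : mul α γ ≤ α := le_trans le_sup_right (hprop α)
  have hγβle : mul γ β ≤ β := le_trans le_sup_left (hprop β)
  have hβγle : mul β γ ≤ β := le_trans le_sup_right (hprop β)
  have hγγle : mul γ γ ≤ γ := le_trans le_sup_left (hprop γ)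
  -- key: γ*γ = γ → γ is a unit
  have key : mul γ γ = γ → ∀ a : Q, mul γ a = a ∧ mul a γ = a := by
    intro hγγ
    have hγα : mul γ α = α := by
      rcases hcover (mul γ α) with h | h | h | h | h
      · exfalso
        have htop1 : mul γ ⊤ = γ := by rw [← hjαγ, hsup_r, h, hγγ, bot_sup_eq]
        have hβb : mul γ β ≤ γ := by
          have h2 : mul γ ⊤ = mul γ β ⊔ mul γ γ := by rw [← hjβγ, hsup_r]
          calc mul γ β ≤ mul γ β ⊔ mul γ γ := le_sup_left
            _ = γ := by rw [← h2, htop1]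
        have hβbot : mul γ β = ⊥ := le_bot_iff.mp (hmβγ ▸ le_inf hγβle hβb)
        have hcon : γ = ⊥ := by
          rw [← htop1, ← hjαβ, hsup_r, h, hβbot, bot_sup_eq]
        exact hbγ hcon.symm
      · exact h
      · exact absurd (h ▸ hγαle) hαβ.2
      · exact absurd (h ▸ hγαle) hαγ.2
      · exact absurd (top_le_iff.mp (h ▸ hγαle)) hαt
    have hγβ : mul γ β = β := by
      rcases hcover (mul γ β) with h | h | h | h | h
      · exfalso
        have htop1 : mul γ ⊤ = γ := by rw [← hjβγ, hsup_r, h, hγγ, bot_sup_eq]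
        have hαb : mul γ α ≤ γ := by
          have h2 : mul γ ⊤ = mul γ α ⊔ mul γ γ := by rw [← hjαγ, hsup_r]
          calc mul γ α ≤ mul γ α ⊔ mul γ γ := le_sup_left
            _ = γ := by rw [← h2, htop1]
        have hαbot : mul γ α = ⊥ := le_bot_iff.mp (hmαγ ▸ le_inf hγαle hαb)
        have hcon : γ = ⊥ := by
          rw [← htop1, ← hjαβ, hsup_r, hαbot, h, bot_sup_eq]
        exact hbγ hcon.symm
      · exact absurd (h ▸ hγβle) hαβ.1
      · exact h
      · exact absurd (h ▸ hγβle) hβγ.2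
      · exact absurd (top_le_iff.mp (h ▸ hγβle)) hβt
    have hαγ2 : mul α γ = α := by
      rcases hcover (mul α γ) with h | h | h | h | h
      · exfalso
        have htop1 : mul ⊤ γ = γ := by rw [← hjαγ, hsup_l, h, hγγ, bot_sup_eq]
        have hβb : mul β γ ≤ γ := by
          have h2 : mul ⊤ γ = mul β γ ⊔ mul γ γ := by rw [← hjβγ, hsup_l]
          calc mul β γ ≤ mul β γ ⊔ mul γ γ := le_sup_left
            _ = γ := by rw [← h2, htop1]
        have hβbot : mul β γ = ⊥ := le_bot_iff.mp (hmβγ ▸ le_inf hβγle hβb)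
        have hcon : γ = ⊥ := by
          rw [← htop1, ← hjαβ, hsup_l, h, hβbot, bot_sup_eq]
        exact hbγ hcon.symm
      · exact h
      · exact absurd (h ▸ hαγle) hαβ.2
      · exact absurd (h ▸ hαγle) hαγ.2
      · exact absurd (top_le_iff.mp (h ▸ hαγle)) hαt
    have hβγ2 : mul β γ = β := by
      rcases hcover (mul β γ) with h | h | h | h | h
      · exfalso
        have htop1 : mul ⊤ γ = γ := by rw [← hjβγ, hsup_l, h, hγγ, bot_sup_eq]
        have hαb : mul α γ ≤ γ := by
          have h2 : mul ⊤ γ = mul α γ ⊔ mul γ γ := by rw [← hjαγ, hsup_l]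
          calc mul α γ ≤ mul α γ ⊔ mul γ γ := le_sup_left
            _ = γ := by rw [← h2, htop1]
        have hαbot : mul α γ = ⊥ := le_bot_iff.mp (hmαγ ▸ le_inf hαγle hαb)
        have hcon : γ = ⊥ := by
          rw [← htop1, ← hjαβ, hsup_l, hαbot, h, bot_sup_eq]
        exact hbγ hcon.symm
      · exact absurd (h ▸ hβγle) hαβ.1
      · exact h
      · exact absurd (h ▸ hβγle) hβγ.2
      · exact absurd (top_le_iff.mp (h ▸ hβγle)) hβt
    have hγbot : mul γ ⊥ = ⊥ := by have := hsSup_right ∅ γ; simpa using this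
    have hbotγ : mul ⊥ γ = ⊥ := by have := hsSup_left ∅ γ; simpa using this
    have hγtop : mul γ ⊤ = ⊤ := by rw [← hjαβ, hsup_r, hγα, hγβ]
    have htopγ : mul ⊤ γ = ⊤ := by rw [← hjαβ, hsup_l, hαγ2, hβγ2]
    intro a
    rcases hcover a with h | h | h | h | h <;> rw [h]
    · exact ⟨hγbot, hbotγ⟩
    · exact ⟨hγα, hαγ2⟩
    · exact ⟨hγβ, hβγ2⟩
    · exact ⟨hγγ, hγγ⟩
    · exact ⟨hγtop, htopγ⟩
  refine ⟨⟨?_, fun h => ⟨γ, key h⟩⟩, key⟩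
  rintro ⟨u, hu⟩
  have hγu : γ ≤ u := by
    have := hprop u
    rw [(hu γ).2, (hu γ).1, sup_idem] at this
    exact this
  rcases hcover u with h | h | h | h | h
  · exact absurd (le_bot_iff.mp (h ▸ hγu)).symm hbγ
  · exact absurd (h ▸ hγu) hαγ.2
  · exact absurd (h ▸ hγu) hβγ.2
  · rw [← h]; exact (hu u).1
  · rw [h] at hu
    rcases hcover (mul γ γ) with h2 | h2 | h2 | h2 | h2
    · exfalso
      have htγ : mul ⊤ γ = γ := (hu γ).1
      have h3 : mul ⊤ γ = mul α γ := by rw [← hjαγ, hsup_l, h2, sup_bot_eq]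
      have h4 : mul α γ = γ := by rw [← h3, htγ]
      exact hαγ.2 (h4 ▸ hαγle)
    · exact absurd (h2 ▸ hγγle) hαγ.1
    · exact absurd (h2 ▸ hγγle) hβγ.1
    · exact h2
    · exact absurd (top_le_iff.mp (h2 ▸ hγγle)) hγt
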